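/- arXiv:1712.04257 — 2 statements merged into one kernel-verified Lean document; each statement's English description precedes it below -/
import Mathlib

section
/- For symmetric positive definite n×n real matrices A and B, one has tr(A - ln A - I) - tr(B - ln B - I) ≤ tr((I - A⁻¹)(A - B)), i.e. the free energy E(C) = tr(C - ln C - I) is convex with gradient I - C⁻¹. -/
open Matrix

lemma trace_eq_sum_eigenvalues {n : ℕ} {M : Matrix (Fin n) (Fin n) ℝ}
    (hM : M.IsHermitian) : M.trace = ∑ i, hM.eigenvalues i := by
  conv_lhs => rw [hM.spectral_theorem]
  rw [Unitary.conjStarAlgAut_apply, trace_mul_cycle, (Matrix.mem_unitaryGroup_iff').mp (hM.eigenvectorUnitary).2,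
    one_mul, trace_diagonal]
  simp [RCLike.ofReal_real_eq_id]

lemma log_det_le_trace {n : ℕ} {M : Matrix (Fin n) (Fin n) ℝ}
    (hM : M.PosDef) : Real.log M.det ≤ M.trace - n := by
  have hev := hM.eigenvalues_pos
  rw [hM.isHermitian.det_eq_prod_eigenvalues, trace_eq_sum_eigenvalues hM.isHermitian]
  simp only [RCLike.ofReal_real_eq_id, id_eq]
  rw [Real.log_prod (fun i _ => (hev i).ne')]
  have : (n : ℝ) = ∑ _i : Fin n, (1:ℝ) := by simp
  rw [this, ← Finset.sum_sub_distrib]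
  exact Finset.sum_le_sum fun i _ => Real.log_le_sub_one_of_pos (hev i)

lemma posDef_conj {n : ℕ} {S B : Matrix (Fin n) (Fin n) ℝ}
    (hS : S.IsHermitian) (hSu : IsUnit S) (hB : B.PosDef) : (S * B * S).PosDef := by
  have := hB.conjTranspose_mul_mul_same (B := S) (Matrix.mulVec_injective_of_isUnit hSu)
  rwa [hS.eq] at this

/-- Convexity inequality for the matrix free energy `E(C) = tr(C - ln C - I)`:
for symmetric positive definite matrices `A, B`,
`E(A) - E(B) ≤ tr((I - A⁻¹)(A - B))`.  Here we use that for a symmetric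
positive definite matrix `C`, `tr (ln C) = log (det C)`, so that
`E(C) = tr C - log (det C) - n`. -/
theorem matrix_free_energy_convexity_ineq
    (n : ℕ) (A B : Matrix (Fin n) (Fin n) ℝ)
    (hAsymm : A.IsSymm) (hBsymm : B.IsSymm)
    (hApd : A.PosDef) (hBpd : B.PosDef) :
    (A.trace - Real.log A.det - n) - (B.trace - Real.log B.det - n)
      ≤ ((1 - A⁻¹) * (A - B)).trace := by
  have hAinv : (A⁻¹).PosDef := hApd.inv
  open scoped MatrixOrder in set S := CFC.sqrt (A⁻¹) with hSdef
  have hSps : S.PosSemidef := by open scoped MatrixOrder in exact (CFC.sqrt_nonneg (A⁻¹)).posSemidef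
  have hSS : S * S = A⁻¹ := by open scoped MatrixOrder in exact CFC.sqrt_mul_sqrt_self (A⁻¹) hAinv.posSemidef.nonneg
  have hdetS : S.det ≠ 0 := by
    intro h
    have : (A⁻¹).det = 0 := by rw [← hSS, det_mul, h, mul_zero]
    exact hAinv.det_pos.ne' this
  have hSu : IsUnit S := (Matrix.isUnit_iff_isUnit_det S).mpr hdetS.isUnit
  have hMpd : (S * B * S).PosDef := posDef_conj hSps.1 hSu hBpd
  have hkey := log_det_le_trace hMpd
  have htrM : (S * B * S).trace = (A⁻¹ * B).trace := by
    rw [trace_mul_cycle, hSS]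
  have hdetM : (S * B * S).det = (A⁻¹).det * B.det := by
    rw [det_mul, det_mul, ← hSS, det_mul]; ring
  rw [htrM, hdetM, det_nonsing_inv, Ring.inverse_eq_inv',
    Real.log_mul (inv_ne_zero hApd.det_pos.ne') hBpd.det_pos.ne', Real.log_inv] at hkey
  have hAA : A⁻¹ * A = 1 := Matrix.nonsing_inv_mul A hApd.det_pos.ne'.isUnit
  have hRHS : ((1 - A⁻¹) * (A - B)).trace
      = A.trace - B.trace - (n : ℝ) + (A⁻¹ * B).trace := by
    rw [sub_mul, mul_sub, mul_sub, one_mul, one_mul, hAA]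
    rw [trace_sub, trace_sub, trace_sub, trace_one]
    simp [Finset.card_univ]
    ring
  rw [hRHS]
  linarith
end

section
/- Subcharacteristic (Whitham) stability for the Suliciu relaxation of a barotropic pressure law: let P: (0,∞) → ℝ be C¹ with P' > 0 on an interval containing h₀ and h₁, and let e(1/h) be the specific internal energy with d e/d(1/h) = -P. If c² ≥ sup over h between h₀ and h₁ of h²P'(h), then e(h₁) - (P(h₁))²/(2c²) ≤ e(h₀) - (P(h₀))²/(2c²) - P(h₁)·(1/h₁ - 1/h₀ + (P(h₁) - P(h₀))/c²). -/
/-- Subcharacteristic (Whitham) stability for the Suliciu relaxation of a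
barotropic pressure law: let `P` be `C¹` with `P' > 0` on `(0,∞)` and let
`e` (a function of the specific volume `v = 1/h`) satisfy `de/dv = -P(1/v)`.
If `c² ≥ h² P'(h)` for all `h` between `h₀` and `h₁`, then
`e(1/h₁) - P(h₁)²/(2c²) ≤ e(1/h₀) - P(h₀)²/(2c²)
  - P(h₁)(1/h₁ - 1/h₀ + (P(h₁) - P(h₀))/c²)`. -/
theorem subcharacteristic_stability
    (P e : ℝ → ℝ) (c : ℝ) (hc : 0 < c)
    (h₀ h₁ : ℝ) (hh₀ : 0 < h₀) (hh₁ : 0 < h₁)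
    (hP : ∀ h ∈ Set.Ioi (0:ℝ), HasDerivAt P (deriv P h) h)
    (hP' : ∀ h ∈ Set.Ioi (0:ℝ), 0 < deriv P h)
    (he : ∀ v ∈ Set.Ioi (0:ℝ), HasDerivAt e (-(P (1 / v))) v)
    (hsub : ∀ h ∈ Set.uIcc h₀ h₁, h ^ 2 * deriv P h ≤ c ^ 2) :
    e (1 / h₁) - (P h₁) ^ 2 / (2 * c ^ 2) ≤
      e (1 / h₀) - (P h₀) ^ 2 / (2 * c ^ 2)
        - P h₁ * (1 / h₁ - 1 / h₀ + (P h₁ - P h₀) / c ^ 2) := by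
  have hc2 : (0:ℝ) < c ^ 2 := by positivity
  set F : ℝ → ℝ := fun h =>
    e (1 / h) + P h₁ * (1 / h) - (P h) ^ 2 / (2 * c ^ 2) + P h₁ * P h / c ^ 2 with hFdef
  have hF : ∀ h ∈ Set.Ioi (0:ℝ),
      HasDerivAt F ((P h - P h₁) * (1 / h ^ 2 - deriv P h / c ^ 2)) h := by
    intro h hh
    have hne : h ≠ 0 := ne_of_gt hh
    have hinv : HasDerivAt (fun x : ℝ => 1 / x) (-(h ^ 2)⁻¹) h := by
      simpa [one_div] using hasDerivAt_inv hne
    have h1 : HasDerivAt (fun x : ℝ => e (1 / x)) (-(P (1 / (1/h))) * (-(h ^ 2)⁻¹)) h :=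
      (he (1/h) (Set.mem_Ioi.2 (one_div_pos.2 hh))).comp h hinv
    have h2 : HasDerivAt (fun x : ℝ => P h₁ * (1 / x)) (P h₁ * (-(h ^ 2)⁻¹)) h :=
      hinv.const_mul _
    have h3 : HasDerivAt (fun x : ℝ => (P x) ^ 2 / (2 * c ^ 2))
        ((2 * P h ^ 1 * deriv P h) / (2 * c ^ 2)) h := ((hP h hh).pow 2).div_const _
    have h4 : HasDerivAt (fun x : ℝ => P h₁ * P x / c ^ 2)
        (P h₁ * deriv P h / c ^ 2) h := (((hP h hh).const_mul (P h₁))).div_const _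
    have := ((h1.add h2).sub h3).add h4
    refine this.congr_deriv ?_
    have : 1 / (1/h) = h := by field_simp
    rw [this]
    field_simp
    ring
  have huIcc : Set.uIcc h₀ h₁ ⊆ Set.Ioi (0:ℝ) := by
    intro x hx
    rcases le_total h₀ h₁ with hle | hle
    · rw [Set.uIcc_of_le hle] at hx; exact lt_of_lt_of_le hh₀ hx.1
    · rw [Set.uIcc_of_ge hle] at hx; exact lt_of_lt_of_le hh₁ hx.1
  have hPmono : StrictMonoOn P (Set.Ioi (0:ℝ)) := by
    apply strictMonoOn_of_deriv_pos (convex_Ioi 0)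
    · exact fun h hh => (hP h hh).continuousAt.continuousWithinAt
    · rw [interior_Ioi]; exact hP'
  have hFcont : ContinuousOn F (Set.uIcc h₀ h₁) :=
    fun x hx => ((hF x (huIcc hx)).continuousAt).continuousWithinAt
  -- key sign fact for the derivative
  have hsign : ∀ x ∈ Set.uIcc h₀ h₁, (0:ℝ) ≤ 1 / x ^ 2 - deriv P x / c ^ 2 := by
    intro x hx
    have hx0 : 0 < x := huIcc hx
    have := hsub x hx
    rw [sub_nonneg, div_le_div_iff₀ hc2 (by positivity)]
    nlinarith
  have key : F h₁ ≤ F h₀ := by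
    rcases le_total h₀ h₁ with hle | hle
    · -- F antitone on [h₀, h₁]
      have : AntitoneOn F (Set.Icc h₀ h₁) := by
        apply antitoneOn_of_deriv_nonpos (convex_Icc _ _)
        · rwa [Set.uIcc_of_le hle] at hFcont
        · intro x hx
          rw [interior_Icc] at hx
          exact (hF x (lt_trans hh₀ hx.1)).differentiableAt.differentiableWithinAt
        · intro x hx
          rw [interior_Icc] at hx
          have hx0 : 0 < x := lt_trans hh₀ hx.1
          have hxI : x ∈ Set.uIcc h₀ h₁ := by
            rw [Set.uIcc_of_le hle]; exact ⟨le_of_lt hx.1, le_of_lt hx.2⟩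
          rw [(hF x hx0).deriv]
          apply mul_nonpos_of_nonpos_of_nonneg
          · have : P x < P h₁ := hPmono hx0 (Set.mem_Ioi.2 hh₁) hx.2
            linarith
          · exact hsign x hxI
      exact this (Set.left_mem_Icc.2 hle) (Set.right_mem_Icc.2 hle) hle
    · -- F monotone on [h₁, h₀]
      have : MonotoneOn F (Set.Icc h₁ h₀) := by
        apply monotoneOn_of_deriv_nonneg (convex_Icc _ _)
        · rwa [Set.uIcc_of_ge hle] at hFcont
        · intro x hx
          rw [interior_Icc] at hx
          exact (hF x (lt_trans hh₁ hx.1)).differentiableAt.differentiableWithinAt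
        · intro x hx
          rw [interior_Icc] at hx
          have hx0 : 0 < x := lt_trans hh₁ hx.1
          have hxI : x ∈ Set.uIcc h₀ h₁ := by
            rw [Set.uIcc_of_ge hle]; exact ⟨le_of_lt hx.1, le_of_lt hx.2⟩
          rw [(hF x hx0).deriv]
          apply mul_nonneg
          · have : P h₁ < P x := hPmono (Set.mem_Ioi.2 hh₁) hx0 hx.1
            linarith
          · exact hsign x hxI
      exact this (Set.left_mem_Icc.2 hle) (Set.right_mem_Icc.2 hle) hle
  have := key
  simp only [hFdef] at this
  have expand : P h₁ * (1 / h₁ - 1 / h₀ + (P h₁ - P h₀) / c ^ 2)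
      = P h₁ * (1 / h₁) - P h₁ * (1 / h₀) + (P h₁ * P h₁ / c ^ 2 - P h₁ * P h₀ / c ^ 2) := by
    ring
  rw [expand]
  linarith [this]
end
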